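/- Let n, k ≥ 1 be integers, let A ∈ ℤ^{m×n} with rows a₁, …, a_m, let b ∈ ℤ^m, let E ⊆ {1,…,m}, and let F = {x ∈ ℝⁿ ∣ aᵢᵀx = bᵢ for i ∈ E, aᵢᵀx ≤ bᵢ for i ∉ E}, with F ⊆ [0,k]ⁿ. Let x̃ ∈ F, ĉ ∈ ℝⁿ, and ỹ ∈ ℝ^m satisfy: |Aᵀỹ − ĉ| ≤ 1 componentwise; ỹᵢ ≥ 0 for every i ∉ E; and, for every i ∉ E, ỹᵢ > 0 implies aᵢᵀx̃ = bᵢ. Then for every x̂ ∈ F ∩ ℤⁿ with ĉᵀx̂ ≥ ĉᵀx̃ and every i ∉ E with ỹᵢ > n·k, one has aᵢᵀx̂ = bᵢ. -/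
import Mathlib


theorem near_dual_feasibility_forces_active_constraints
    (n m k : ℕ) (hn : 1 ≤ n) (hk : 1 ≤ k)
    (A : Matrix (Fin m) (Fin n) ℤ) (b : Fin m → ℤ) (E : Set (Fin m))
    (F : Set (Fin n → ℝ))
    (hF : F = {x : Fin n → ℝ |
      (∀ i ∈ E, ∑ j, (A i j : ℝ) * x j = (b i : ℝ)) ∧
      (∀ i ∉ E, ∑ j, (A i j : ℝ) * x j ≤ (b i : ℝ))})
    (hFbox : ∀ x ∈ F, ∀ j, 0 ≤ x j ∧ x j ≤ (k : ℝ))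
    (xt : Fin n → ℝ) (hxt : xt ∈ F)
    (ch : Fin n → ℝ) (y : Fin m → ℝ)
    (hclose : ∀ j, |(∑ i, (A i j : ℝ) * y i) - ch j| ≤ 1)
    (hynn : ∀ i ∉ E, 0 ≤ y i)
    (hcs : ∀ i ∉ E, 0 < y i → ∑ j, (A i j : ℝ) * xt j = (b i : ℝ)) :
    ∀ xh ∈ F, (∀ j, ∃ z : ℤ, xh j = (z : ℝ)) →
      ∑ j, ch j * xt j ≤ ∑ j, ch j * xh j →
      ∀ i ∉ E, (n : ℝ) * k < y i → ∑ j, (A i j : ℝ) * xh j = (b i : ℝ) := by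
  intro xh hxhF hint hobj i0 hi0 hyi0
  by_contra hne
  have hboxt := hFbox xt hxt
  have hboxh := hFbox xh hxhF
  choose z hz using hint
  rw [hF] at hxt hxhF
  obtain ⟨hxtE, hxtI⟩ := hxt
  obtain ⟨hxhE, hxhI⟩ := hxhF
  -- integrality: a_{i0}ᵀ x̂ ≤ b_{i0} - 1
  have hint0 : ∑ j, (A i0 j : ℝ) * xh j = ((∑ j, A i0 j * z j : ℤ) : ℝ) := by
    push_cast
    exact Finset.sum_congr rfl (fun j _ => by rw [hz j])
  have hlt : ∑ j, (A i0 j : ℝ) * xh j < (b i0 : ℝ) :=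
    lt_of_le_of_ne (hxhI i0 hi0) hne
  have hle1 : ∑ j, (A i0 j : ℝ) * xh j ≤ (b i0 : ℝ) - 1 := by
    rw [hint0] at hlt ⊢
    have h1 : (∑ j, A i0 j * z j : ℤ) < b i0 := by exact_mod_cast hlt
    have h2 : (∑ j, A i0 j * z j : ℤ) ≤ b i0 - 1 := by omega
    calc ((∑ j, A i0 j * z j : ℤ) : ℝ) ≤ ((b i0 - 1 : ℤ) : ℝ) := by exact_mod_cast h2
      _ = (b i0 : ℝ) - 1 := by push_cast; ring
  set S := ∑ i, y i * (∑ j, (A i j : ℝ) * xh j - ∑ j, (A i j : ℝ) * xt j) with hSdef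
  -- every term is ≤ 0
  have hterm : ∀ i, y i * (∑ j, (A i j : ℝ) * xh j - ∑ j, (A i j : ℝ) * xt j) ≤ 0 := by
    intro i
    by_cases hiE : i ∈ E
    · rw [hxhE i hiE, hxtE i hiE]; simp
    · rcases lt_or_eq_of_le (hynn i hiE) with hy | hy
      · have := hcs i hiE hy
        rw [this]
        have : ∑ j, (A i j : ℝ) * xh j - (b i : ℝ) ≤ 0 := by
          linarith [hxhI i hiE]
        exact mul_nonpos_of_nonneg_of_nonpos (le_of_lt hy) this
      · rw [← hy]; simp
  -- upper bound: S ≤ -y i0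
  have hy0pos : (0:ℝ) < y i0 := by
    have : (0:ℝ) ≤ (n:ℝ) * k := by positivity
    linarith
  have htermi0 : y i0 * (∑ j, (A i0 j : ℝ) * xh j - ∑ j, (A i0 j : ℝ) * xt j) ≤ - y i0 := by
    have hxt0 : ∑ j, (A i0 j : ℝ) * xt j = (b i0 : ℝ) := hcs i0 hi0 hy0pos
    rw [hxt0]
    have h3 : ∑ j, (A i0 j : ℝ) * xh j - (b i0 : ℝ) ≤ -1 := by linarith
    calc y i0 * (∑ j, (A i0 j : ℝ) * xh j - (b i0 : ℝ)) ≤ y i0 * (-1) :=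
          mul_le_mul_of_nonneg_left h3 (le_of_lt hy0pos)
      _ = - y i0 := by ring
  have hSub : S ≤ - y i0 := by
    have h0 : S = y i0 * (∑ j, (A i0 j : ℝ) * xh j - ∑ j, (A i0 j : ℝ) * xt j)
        + ∑ i ∈ Finset.univ.erase i0, y i * (∑ j, (A i j : ℝ) * xh j - ∑ j, (A i j : ℝ) * xt j) :=
      (Finset.add_sum_erase _ _ (Finset.mem_univ i0)).symm
    have h1 : ∑ i ∈ Finset.univ.erase i0, y i * (∑ j, (A i j : ℝ) * xh j - ∑ j, (A i j : ℝ) * xt j) ≤ 0 :=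
      Finset.sum_nonpos (fun i _ => hterm i)
    linarith
  -- lower bound: S ≥ - n * k
  have hS : S = ∑ j, (∑ i, (A i j : ℝ) * y i) * (xh j - xt j) := by
    rw [hSdef]
    simp only [mul_sub, Finset.mul_sum, Finset.sum_mul, ← Finset.sum_sub_distrib]
    rw [Finset.sum_comm]
    exact Finset.sum_congr rfl (fun j _ => Finset.sum_congr rfl (fun i _ => by ring))
  have hjb : ∀ j, (∑ i, (A i j : ℝ) * y i) * (xh j - xt j) ≥ ch j * (xh j - xt j) - k := by
    intro j
    have habs : |xh j - xt j| ≤ (k:ℝ) := by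
      obtain ⟨h1, h2⟩ := hboxt j
      obtain ⟨h3, h4⟩ := hboxh j
      rw [abs_le]; constructor <;> linarith
    have hd := hclose j
    have key : |((∑ i, (A i j : ℝ) * y i) - ch j) * (xh j - xt j)| ≤ (k:ℝ) := by
      rw [abs_mul]
      calc |(∑ i, (A i j : ℝ) * y i) - ch j| * |xh j - xt j| ≤ 1 * (k:ℝ) := by
            apply mul_le_mul hd habs (abs_nonneg _) zero_le_one
        _ = (k:ℝ) := one_mul _
    have := neg_abs_le (((∑ i, (A i j : ℝ) * y i) - ch j) * (xh j - xt j))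
    nlinarith [this, key]
  have hSlb : - ((n:ℝ) * k) ≤ S := by
    rw [hS]
    have h1 : ∑ j, (ch j * (xh j - xt j) - (k:ℝ)) ≤ ∑ j, (∑ i, (A i j : ℝ) * y i) * (xh j - xt j) :=
      Finset.sum_le_sum (fun j _ => hjb j)
    have h2 : ∑ j, (ch j * (xh j - xt j) - (k:ℝ)) = (∑ j, ch j * xh j - ∑ j, ch j * xt j) - (n:ℝ) * k := by
      simp [Finset.sum_sub_distrib, mul_sub, Finset.mul_sum]
      try ring
    linarith
  linarith
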